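/- The infinite product over all integers n ≥ 2 of (1 - 1/n^3) equals cosh(π√3/2)/(3π). -/

import Mathlib

open Real Filter Finset Topology

noncomputable section ProdCubeAux

/-- primitive cube root of unity -/
def pcOmega : ℂ := ⟨-1/2, Real.sqrt 3 / 2⟩

local notation "ω" => pcOmega

lemma pc_sqrt3_sq : Real.sqrt 3 * Real.sqrt 3 = 3 := Real.mul_self_sqrt (by norm_num)

lemma pc_omega_sq : ω ^ 2 + ω + 1 = 0 := by
  have h3 := pc_sqrt3_sq
  simp only [Complex.ext_iff, pcOmega, pow_two, Complex.mul_re, Complex.mul_im, Complex.add_re,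
    Complex.add_im, Complex.one_re, Complex.one_im, Complex.zero_re, Complex.zero_im]
  constructor <;> nlinarith [h3]

lemma pc_omega_im : (pcOmega).im = Real.sqrt 3 / 2 := rfl

lemma pc_im_ne : (pcOmega).im ≠ 0 := by
  rw [pc_omega_im]; positivity

lemma pc_term (j : ℕ) :
    1 - 1 / ((j : ℂ) + 2) ^ 3 =
      ((j : ℂ) + 1) * ((2 - ω) + (j : ℂ)) * ((3 + ω) + (j : ℂ)) / ((j : ℂ) + 2) ^ 3 := by
  have hc : (j : ℂ) + 2 ≠ 0 := by
    intro h
    have := congrArg Complex.re h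
    push_cast at this
    simp [Complex.add_re] at this
    nlinarith [this, Nat.cast_nonneg (α := ℝ) j]
  field_simp
  linear_combination ((j : ℂ) + 1) * pc_omega_sq

lemma pc_prod1 (n : ℕ) : ∏ j ∈ range n, ((j : ℂ) + 1) = (Nat.factorial n : ℕ) := by
  induction n with
  | zero => simp
  | succ n ih => rw [prod_range_succ, ih, Nat.factorial_succ]; push_cast; ring

lemma pc_prod2 (n : ℕ) : ∏ j ∈ range n, ((j : ℂ) + 2) = (Nat.factorial (n+1) : ℕ) := by
  induction n with
  | zero => simp
  | succ n ih =>
      rw [prod_range_succ, ih, show n + 1 + 1 = (n + 1) + 1 from rfl,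
        Nat.factorial_succ (n + 1), Nat.cast_mul, Nat.cast_add, Nat.cast_add]
      push_cast
      ring

lemma pc_prodz_ne {z : ℂ} (hz : z.im ≠ 0) (n : ℕ) :
    ∏ j ∈ range n, (z + (j : ℂ)) ≠ 0 := by
  apply Finset.prod_ne_zero_iff.mpr
  intro j _
  intro h
  have := congrArg Complex.im h
  simp [Complex.add_im] at this
  exact hz this

lemma pc_key (n : ℕ) (hn : n ≠ 0) :
    (∏ j ∈ range (n + 1), (1 - 1 / ((j : ℂ) + 2) ^ 3)) *
      (Complex.GammaSeq (2 - ω) n * Complex.GammaSeq (3 + ω) n) =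
      (n : ℂ) ^ 5 / (((n : ℂ) + 2) ^ 3 * ((n : ℂ) + 1) ^ 2) := by
  have hn0 : (n : ℂ) ≠ 0 := Nat.cast_ne_zero.mpr hn
  have hP1 : ∏ j ∈ range (n + 1), ((2 - ω) + (j : ℂ)) ≠ 0 :=
    pc_prodz_ne (by simp [Complex.sub_im, pc_omega_im]) _
  have hP2 : ∏ j ∈ range (n + 1), ((3 + ω) + (j : ℂ)) ≠ 0 :=
    pc_prodz_ne (by simp [Complex.add_im, pc_omega_im]) _
  have hfac : (Nat.factorial n : ℂ) ≠ 0 := Nat.cast_ne_zero.mpr n.factorial_ne_zero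
  have hn1 : (n : ℂ) + 1 ≠ 0 := by
    intro h; have := congrArg Complex.re h; push_cast at this; simp at this
    nlinarith [this, Nat.cast_nonneg (α := ℝ) n]
  have hn2 : (n : ℂ) + 2 ≠ 0 := by
    intro h; have := congrArg Complex.re h; push_cast at this; simp at this
    nlinarith [this, Nat.cast_nonneg (α := ℝ) n]
  have hpow : (n : ℂ) ^ (2 - ω) * (n : ℂ) ^ ((3 : ℂ) + ω) = (n : ℂ) ^ (5 : ℕ) := by
    rw [← Complex.cpow_add _ _ hn0]
    have h5 : (2 - ω) + ((3 : ℂ) + ω) = ((5 : ℕ) : ℂ) := by push_cast; ring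
    rw [h5, Complex.cpow_natCast]
  have hfac2 : ((Nat.factorial (n + 2) : ℕ) : ℂ)
      = ((n : ℂ) + 2) * ((n : ℂ) + 1) * (Nat.factorial n : ℂ) := by
    rw [Nat.factorial_succ, Nat.factorial_succ]; push_cast; ring
  rw [Finset.prod_congr rfl fun j _ => pc_term j, Finset.prod_div_distrib,
    Finset.prod_mul_distrib, Finset.prod_mul_distrib, Finset.prod_pow, pc_prod1, pc_prod2]
  simp only [Complex.GammaSeq]
  rw [← hpow, hfac2]
  set A := (n : ℂ) ^ (2 - ω) with hA
  set B := (n : ℂ) ^ ((3 : ℂ) + ω) with hB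
  have hfac0 : ((Nat.factorial (n + 1) : ℕ) : ℂ) = ((n : ℂ) + 1) * (Nat.factorial n : ℂ) := by
    rw [Nat.factorial_succ]; push_cast; ring
  rw [hfac0]
  field_simp



lemma pc_ne_of_im {z : ℂ} (h : z.im ≠ 0) : z ≠ 0 := fun hz => h (by rw [hz]; rfl)

lemma pc_rhs_tendsto :
    Tendsto (fun n : ℕ => (n : ℂ) ^ 5 / (((n : ℂ) + 2) ^ 3 * ((n : ℂ) + 1) ^ 2)) atTop (𝓝 1) := by
  have h2 : Tendsto (fun n : ℕ => (n : ℂ) / ((n : ℂ) + 2)) atTop (𝓝 1) :=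
    tendsto_natCast_div_add_atTop (2 : ℂ)
  have h1 : Tendsto (fun n : ℕ => (n : ℂ) / ((n : ℂ) + 1)) atTop (𝓝 1) :=
    tendsto_natCast_div_add_atTop (1 : ℂ)
  have h := (h2.pow 3).mul (h1.pow 2)
  simp only [one_pow, mul_one] at h
  refine h.congr fun n => ?_
  rw [div_pow, div_pow, div_mul_div_comm, ← pow_add]

lemma pc_GammaSeq_ne {z : ℂ} (hz : z.im ≠ 0) {n : ℕ} (hn : n ≠ 0) :
    Complex.GammaSeq z n ≠ 0 := by
  have hn0 : (n : ℂ) ≠ 0 := Nat.cast_ne_zero.mpr hn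
  apply div_ne_zero (mul_ne_zero ?_ ?_) (pc_prodz_ne hz _)
  · rw [Complex.cpow_def_of_ne_zero hn0]
    exact Complex.exp_ne_zero _
  · exact Nat.cast_ne_zero.mpr n.factorial_ne_zero

lemma pc_im1 : ((2 : ℂ) - ω).im ≠ 0 := by
  simpa [Complex.sub_im] using pc_im_ne

lemma pc_im2 : ((3 : ℂ) + ω).im ≠ 0 := by
  simpa [Complex.add_im] using pc_im_ne

lemma pc_Gamma_ne {z : ℂ} (hz : z.im ≠ 0) : Complex.Gamma z ≠ 0 := by
  apply Complex.Gamma_ne_zero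
  intro m h
  apply hz
  rw [h]
  simp

lemma pc_S_tendsto :
    Tendsto (fun n : ℕ => ∏ j ∈ range (n + 1), (1 - 1 / ((j : ℂ) + 2) ^ 3)) atTop
      (𝓝 (1 / (Complex.Gamma (2 - ω) * Complex.Gamma (3 + ω)))) := by
  have hne : Complex.Gamma (2 - ω) * Complex.Gamma (3 + ω) ≠ 0 :=
    mul_ne_zero (pc_Gamma_ne pc_im1) (pc_Gamma_ne pc_im2)
  have h := pc_rhs_tendsto.div
    ((Complex.GammaSeq_tendsto_Gamma (2 - ω)).mul (Complex.GammaSeq_tendsto_Gamma (3 + ω))) hne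
  refine Tendsto.congr' ?_ h
  filter_upwards [eventually_ne_atTop 0] with n hn
  have hGne : Complex.GammaSeq (2 - ω) n * Complex.GammaSeq (3 + ω) n ≠ 0 :=
    mul_ne_zero (pc_GammaSeq_ne pc_im1 hn) (pc_GammaSeq_ne pc_im2 hn)
  simp only [Pi.div_apply]
  rw [← pc_key n hn, mul_div_assoc, div_self hGne, mul_one]

lemma pc_omega_cube : ω ^ 3 = 1 := by
  linear_combination (ω - 1) * pc_omega_sq

lemma pc_neg3 : (1 - ω) * (2 + ω) * (1 + ω) * ω = -3 := by
  linear_combination (-ω ^ 2 - ω + 3) * pc_omega_sq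

lemma pc_sin : Complex.sin ((π : ℂ) * ω) = -(Real.cosh (π * Real.sqrt 3 / 2) : ℂ) := by
  have hsplit : (π : ℂ) * ω = (↑(-(π / 2)) : ℂ) + (↑(π * Real.sqrt 3 / 2) : ℂ) * Complex.I := by
    apply Complex.ext <;>
      simp [pcOmega, Complex.mul_re, Complex.mul_im, Complex.add_re, Complex.add_im,
        Complex.ofReal_re, Complex.ofReal_im, Complex.I_re, Complex.I_im] <;> ring
  rw [hsplit, Complex.sin_add, Complex.cos_mul_I, Complex.sin_mul_I,
    ← Complex.ofReal_sin, ← Complex.ofReal_cos, ← Complex.ofReal_cosh]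
  simp

lemma pc_gamma : Complex.Gamma (2 - ω) * Complex.Gamma (3 + ω)
    = 3 * (π : ℂ) / (Real.cosh (π * Real.sqrt 3 / 2) : ℂ) := by
  have h1mω : (1 : ℂ) - ω ≠ 0 := pc_ne_of_im (by simpa [Complex.sub_im] using pc_im_ne)
  have h1ω : (1 : ℂ) + ω ≠ 0 := pc_ne_of_im (by simpa [Complex.add_im] using pc_im_ne)
  have h2ω : (2 : ℂ) + ω ≠ 0 := pc_ne_of_im (by simpa [Complex.add_im] using pc_im_ne)
  have hω : ω ≠ 0 := pc_ne_of_im pc_im_ne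
  have e1 : Complex.Gamma (2 - ω) = (1 - ω) * Complex.Gamma (1 - ω) := by
    rw [show (2 : ℂ) - ω = (1 - ω) + 1 by ring, Complex.Gamma_add_one _ h1mω]
  have e2 : Complex.Gamma (3 + ω) = (2 + ω) * ((1 + ω) * (ω * Complex.Gamma ω)) := by
    rw [show (3 : ℂ) + ω = (2 + ω) + 1 by ring, Complex.Gamma_add_one _ h2ω,
      show (2 : ℂ) + ω = (1 + ω) + 1 by ring, Complex.Gamma_add_one _ h1ω,
      show (1 : ℂ) + ω = ω + 1 by ring, Complex.Gamma_add_one _ hω]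
  have key : Complex.Gamma (2 - ω) * Complex.Gamma (3 + ω)
      = ((1 - ω) * (2 + ω) * (1 + ω) * ω) * (Complex.Gamma ω * Complex.Gamma (1 - ω)) := by
    rw [e1, e2]; ring
  rw [key, pc_neg3, Complex.Gamma_mul_Gamma_one_sub, pc_sin]
  have hc : (Real.cosh (π * Real.sqrt 3 / 2) : ℂ) ≠ 0 := by
    exact_mod_cast (Real.cosh_pos _).ne'
  field_simp

lemma pc_pos (n : ℕ) : 0 < 1 - 1 / ((n : ℝ) + 2) ^ 3 := by
  have h2 : (2 : ℝ) ≤ (n : ℝ) + 2 := by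
    have := Nat.cast_nonneg (α := ℝ) n; linarith
  have h8 : (8 : ℝ) ≤ ((n : ℝ) + 2) ^ 3 := by
    have := pow_le_pow_left₀ (by norm_num : (0:ℝ) ≤ 2) h2 3
    norm_num at this
    linarith
  have : 1 / ((n : ℝ) + 2) ^ 3 ≤ 1 / 8 := by
    apply one_div_le_one_div_of_le (by norm_num) h8
  linarith

lemma pc_summable_log : Summable fun n : ℕ => Real.log (1 - 1 / ((n : ℝ) + 2) ^ 3) := by
  have hs0 : Summable fun n : ℕ => 1 / ((n : ℝ)) ^ 3 :=
    Real.summable_one_div_nat_pow.mpr (by norm_num : 1 < 3)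
  have hs1 : Summable fun n : ℕ => 1 / (((n + 2 : ℕ) : ℝ)) ^ 3 :=
    (summable_nat_add_iff (f := fun n : ℕ => 1 / ((n : ℝ)) ^ 3) 2).mpr hs0
  have hs2 : Summable fun n : ℕ => 2 * (1 / (((n : ℝ) + 2)) ^ 3) := by
    apply Summable.mul_left
    refine hs1.congr fun n => ?_
    push_cast
    ring
  apply Summable.of_norm_bounded hs2
  intro n
  have h2 : (2 : ℝ) ≤ (n : ℝ) + 2 := by
    have := Nat.cast_nonneg (α := ℝ) n; linarith
  have h8 : (8 : ℝ) ≤ ((n : ℝ) + 2) ^ 3 := by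
    have := pow_le_pow_left₀ (by norm_num : (0:ℝ) ≤ 2) h2 3
    norm_num at this
    linarith
  have hx : 0 < 1 / ((n : ℝ) + 2) ^ 3 := by positivity
  have hx8 : 1 / ((n : ℝ) + 2) ^ 3 ≤ 1 / 8 := one_div_le_one_div_of_le (by norm_num) h8
  set x := 1 / ((n : ℝ) + 2) ^ 3 with hxdef
  have hfpos : 0 < 1 - x := by linarith
  have hlog : Real.log (1 - x) ≤ 0 := Real.log_nonpos (by linarith) (by linarith)
  rw [Real.norm_eq_abs, abs_of_nonpos hlog]
  have hb := Real.log_le_sub_one_of_pos (inv_pos.mpr hfpos)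
  rw [Real.log_inv] at hb
  have hinv : (1 - x)⁻¹ - 1 = x / (1 - x) := by field_simp; ring
  rw [hinv] at hb
  rw [le_div_iff₀ hfpos] at hb
  nlinarith [hb, hx, hx8, hfpos, mul_nonneg (neg_nonneg.mpr hlog) (by linarith : (0:ℝ) ≤ 1/8 - x)]

lemma pc_mult : Multipliable fun n : ℕ => 1 - 1 / ((n : ℝ) + 2) ^ 3 := by
  exact Real.multipliable_of_summable_log (fun n => pc_pos n) pc_summable_log

end ProdCubeAux

open Real Filter Finset Topology in
/-- `∏_{n ≥ 2} (1 - 1/n^3) = cosh(π√3/2)/(3π)`. -/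
theorem prod_one_sub_inv_pow_three :
    ∏' n : ℕ, (1 - 1 / ((n : ℝ) + 2) ^ 3) = Real.cosh (π * Real.sqrt 3 / 2) / (3 * π) := by
  have ht : Tendsto (fun n : ℕ => ∏ j ∈ range (n + 1), (1 - 1 / ((j : ℝ) + 2) ^ 3)) atTop
      (𝓝 (∏' n : ℕ, (1 - 1 / ((n : ℝ) + 2) ^ 3))) :=
    pc_mult.hasProd.tendsto_prod_nat.comp (tendsto_add_atTop_nat 1)
  have htC : Tendsto (fun n : ℕ => ∏ j ∈ range (n + 1), (1 - 1 / ((j : ℂ) + 2) ^ 3)) atTop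
      (𝓝 ((∏' n : ℕ, (1 - 1 / ((n : ℝ) + 2) ^ 3) : ℝ) : ℂ)) := by
    have h := (Complex.continuous_ofReal.tendsto _).comp ht
    refine h.congr fun n => ?_
    rw [Function.comp_apply, Complex.ofReal_prod]
    exact Finset.prod_congr rfl fun j _ => by push_cast; ring
  have heq := tendsto_nhds_unique htC pc_S_tendsto
  rw [pc_gamma] at heq
  have hc : (0 : ℝ) < Real.cosh (π * Real.sqrt 3 / 2) := Real.cosh_pos _
  have hπ : (0 : ℝ) < π := Real.pi_pos
  have : ((∏' n : ℕ, (1 - 1 / ((n : ℝ) + 2) ^ 3) : ℝ) : ℂ)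
      = ((Real.cosh (π * Real.sqrt 3 / 2) / (3 * π) : ℝ) : ℂ) := by
    rw [heq]
    push_cast
    rw [one_div_div]
  exact_mod_cast this
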